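/- Let G' be obtained from a connected graph G of girth at least p by adding, for each edge uv of G, a new path of length p - 1 between u and v through new internal vertices (keeping the edge uv), so each edge of G lies on a cycle of length p in G'. Then for every k, G has a connected vertex cover of size at most k if and only if G' has a connected feedback vertex set of size at most k. -/

import Mathlib

open SimpleGraph

namespace Paper

variable {V : Type*}

/-- `S` is an independent set of `G`. -/
def IsIndep (G : SimpleGraph V) (S : Set V) : Prop :=
  S.Pairwise fun a b => ¬ G.Adj a b

/-- `S` is a maximal independent set of `G`. -/
def IsMaxIndep (G : SimpleGraph V) (S : Set V) : Prop :=
  IsIndep G S ∧ ∀ v ∉ S, ¬ IsIndep G (insert v S)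

/-- `S` is a maximal independent set of the subgraph of `G` induced by `W`. -/
def IsMaxIndepIn (G : SimpleGraph V) (W S : Set V) : Prop :=
  S ⊆ W ∧ IsIndep G S ∧ ∀ v ∈ W, v ∉ S → ∃ w ∈ S, G.Adj v w

/-- `S` is an odd cycle transversal of `G`: deleting `S` leaves a bipartite graph. -/
def IsOCT (G : SimpleGraph V) (S : Set V) : Prop :=
  (G.induce (Sᶜ : Set V)).Colorable 2

/-- `S` is a minimal odd cycle transversal of `G`. -/
def IsMinOCT (G : SimpleGraph V) (S : Set V) : Prop :=
  IsOCT G S ∧ ∀ T ⊂ S, ¬ IsOCT G T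

/-- `S` is a feedback vertex set of `G`: deleting `S` leaves a forest. -/
def IsFVS (G : SimpleGraph V) (S : Set V) : Prop :=
  (G.induce (Sᶜ : Set V)).IsAcyclic

/-- `S` is a minimal feedback vertex set of `G`. -/
def IsMinFVS (G : SimpleGraph V) (S : Set V) : Prop :=
  IsFVS G S ∧ ∀ T ⊂ S, ¬ IsFVS G T

/-- `S` is a vertex cover of `G`. -/
def IsVC (G : SimpleGraph V) (S : Set V) : Prop :=
  ∀ ⦃a b⦄, G.Adj a b → a ∈ S ∨ b ∈ S

/-- `S` induces a connected subgraph of `G`. -/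
def ConnSet (G : SimpleGraph V) (S : Set V) : Prop :=
  (G.induce S).Connected

/-- The graph `sP₂`: the disjoint union of `s` copies of an edge. -/
def sP2 (s : ℕ) : SimpleGraph (Fin s × Fin 2) where
  Adj p q := p.1 = q.1 ∧ p.2 ≠ q.2
  symm := ⟨fun _ _ h => ⟨h.1.symm, h.2.symm⟩⟩
  loopless := ⟨fun _ h => h.2 rfl⟩

/-- `G` contains an induced subgraph isomorphic to `H`. -/
def HasInducedIso {W : Type*} (G : SimpleGraph V) (H : SimpleGraph W) : Prop :=
  ∃ T : Set V, Nonempty (G.induce T ≃g H)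

/-- `G` is `sP₂`-free. -/
def sP2Free (s : ℕ) (G : SimpleGraph V) : Prop :=
  ¬ HasInducedIso G (sP2 s)

/-- `G` is claw-free: it has no induced `K_{1,3}`. -/
def ClawFree (G : SimpleGraph V) : Prop :=
  ¬ HasInducedIso G (completeBipartiteGraph (Fin 1) (Fin 3))

/-- `G` has an even cycle factor: a spanning 2-regular subgraph with no odd cycle. -/
def HasEvenCycleFactor (G : SimpleGraph V) : Prop :=
  ∃ H : SimpleGraph V, H ≤ G ∧ (∀ v, (H.neighborSet v).ncard = 2) ∧ H.Colorable 2

/-- The number of neighbours of `v` inside the set `F`. -/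
noncomputable def degIn (G : SimpleGraph V) (F : Set V) (v : V) : ℕ :=
  {w | w ∈ F ∧ G.Adj v w}.ncard

/-- `{x, y}` is a component of `G[F]` isomorphic to `P₂`. -/
def IsP2Comp (G : SimpleGraph V) (F : Set V) (x y : V) : Prop :=
  x ∈ F ∧ y ∈ F ∧ G.Adj x y ∧
  (∀ w ∈ F, G.Adj x w → w = y) ∧ (∀ w ∈ F, G.Adj y w → w = x)

/-- `F'` is a skeleton of the forest `G[F]`: all vertices of degree at least 2 in `G[F]`
together with exactly one vertex from each `P₂`-component. -/
def IsSkeleton (G : SimpleGraph V) (F F' : Set V) : Prop :=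
  F' ⊆ F ∧ (∀ v ∈ F, 2 ≤ degIn G F v → v ∈ F') ∧
  (∀ v ∈ F', 2 ≤ degIn G F v ∨ ∃ y, IsP2Comp G F v y) ∧
  (∀ x y, IsP2Comp G F x y → (x ∈ F' ↔ y ∉ F'))

/-- The graph obtained from `G` by adding, for each edge `e` of `G` (with endpoints given by the
orientation `o`), a new path with `q` edges (through `q - 1` new internal vertices) between its
endpoints, keeping all original edges of `G`. -/
def addPaths (G : SimpleGraph V) (q : ℕ) (o : G.edgeSet → V × V) :
    SimpleGraph (V ⊕ (G.edgeSet × Fin (q - 1))) :=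
  SimpleGraph.fromRel fun x y =>
    (∃ a b : V, x = Sum.inl a ∧ y = Sum.inl b ∧ G.Adj a b) ∨
    (∃ (e : G.edgeSet) (i : Fin (q - 1)),
      x = Sum.inl (o e).1 ∧ y = Sum.inr (e, i) ∧ (i : ℕ) = 0) ∨
    (∃ (e : G.edgeSet) (i j : Fin (q - 1)),
      x = Sum.inr (e, i) ∧ y = Sum.inr (e, j) ∧ (j : ℕ) = (i : ℕ) + 1) ∨
    (∃ (e : G.edgeSet) (i : Fin (q - 1)),
      x = Sum.inr (e, i) ∧ y = Sum.inl (o e).2 ∧ (i : ℕ) = q - 2)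


section Aux
variable {α β : Type*}

lemma connset_map {A : SimpleGraph α} {B : SimpleGraph β} (f : α → β) {s : Set α}
    (h : ∀ x y : α, A.Adj x y → f x = f y ∨ B.Adj (f x) (f y))
    (hc : (A.induce s).Connected) : (B.induce (f '' s)).Connected := by
  have hmem : ∀ x : s, f x ∈ f '' s := fun x => ⟨x, x.2, rfl⟩
  have hreach : ∀ x y : s, (A.induce s).Walk x y →
      (B.induce (f '' s)).Reachable ⟨f x, hmem x⟩ ⟨f y, hmem y⟩ := by
    intro x y w
    induction w with
    | nil => exact Reachable.refl _
    | @cons a b c hadj w ih =>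
      have hadj' : A.Adj a b := hadj
      rcases h _ _ hadj' with heq | hB
      · have he : (⟨f a, hmem a⟩ : ↥(f '' s)) = ⟨f b, hmem b⟩ := Subtype.ext heq
        rw [he]; exact ih
      · exact (SimpleGraph.Adj.reachable
          (show (B.induce (f '' s)).Adj ⟨f a, hmem a⟩ ⟨f b, hmem b⟩ from hB)).trans ih
  rw [connected_iff] at hc ⊢
  obtain ⟨hpre, hne⟩ := hc
  constructor
  · rintro ⟨b1, a1, ha1, rfl⟩ ⟨b2, a2, ha2, rfl⟩
    exact hreach ⟨a1, ha1⟩ ⟨a2, ha2⟩ (hpre ⟨a1, ha1⟩ ⟨a2, ha2⟩).some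
  · obtain ⟨⟨a, ha⟩⟩ := hne
    exact ⟨⟨f a, a, ha, rfl⟩⟩

lemma cycle_two_neighbors {A : SimpleGraph α} {a : α} {c : A.Walk a a} (hc : c.IsCycle)
    {x : α} (hx : x ∈ c.support) :
    ∃ y z, y ≠ z ∧ A.Adj x y ∧ A.Adj x z ∧ y ∈ c.support ∧ z ∈ c.support := by
  classical
  have hc' := hc.rotate hx
  obtain ⟨y, hxy, q, hq⟩ := Walk.not_nil_iff.mp hc'.not_nil
  rw [hq, Walk.cons_isCycle_iff] at hc'
  obtain ⟨hqpath, hqe⟩ := hc'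
  obtain ⟨z, hxz, r, hr⟩ :=
    Walk.not_nil_iff.mp (Walk.not_nil_of_ne hxy.ne : ¬ q.reverse.Nil)
  have hzq : z ∈ q.support := by
    have h1 : z ∈ q.reverse.support := by rw [hr]; simp
    rwa [Walk.support_reverse, List.mem_reverse] at h1
  have hyz : y ≠ z := by
    rintro rfl
    apply hqe
    have h1 : s(x, y) ∈ q.reverse.edges := by rw [hr]; simp
    rwa [Walk.edges_reverse, List.mem_reverse] at h1
  have hperm := Walk.support_rotate c x hx
  have htail : ∀ w, w ∈ (c.rotate x hx).support.tail → w ∈ c.support := by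
    intro w hw
    have h1 := hperm.perm.mem_iff.mp hw
    rw [c.support_eq_cons]
    exact List.mem_cons_of_mem _ h1
  refine ⟨y, z, hyz, hxy, hxz, ?_, ?_⟩
  · apply htail; rw [hq]; simp
  · apply htail; rw [hq]; simpa using hzq
end Aux

variable {G : SimpleGraph V}

lemma addPaths_adj_inl_inl {q : ℕ} {o : G.edgeSet → V × V} {a b : V} :
    (addPaths G q o).Adj (Sum.inl a) (Sum.inl b) ↔ G.Adj a b := by
  simp only [addPaths, fromRel_adj]
  simp only [ne_eq, Sum.inl.injEq, reduceCtorEq, false_and, and_false, exists_false, or_false,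
    exists_and_left, exists_eq_left', false_or, exists_eq_left]
  constructor
  · rintro ⟨hne, h | h⟩
    · exact h
    · exact h.symm
  · exact fun h => ⟨h.ne, Or.inl h⟩

lemma addPaths_adj_inr {q : ℕ} {o : G.edgeSet → V × V} {x : V ⊕ (G.edgeSet × Fin (q-1))}
    {e : G.edgeSet} {j : Fin (q-1)} :
    (addPaths G q o).Adj x (Sum.inr (e, j)) ↔
      (x = Sum.inl (o e).1 ∧ (j : ℕ) = 0) ∨
      (x = Sum.inl (o e).2 ∧ (j : ℕ) = q - 2) ∨
      (∃ i : Fin (q-1), x = Sum.inr (e, i) ∧ ((j:ℕ) = (i:ℕ) + 1 ∨ (i:ℕ) = (j:ℕ) + 1)) := by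
  simp only [addPaths, fromRel_adj]
  simp
  constructor
  · rintro ⟨hne, (⟨a, hb, hx, he, hi⟩ | ⟨a, hb, i, hx, he, hi⟩) |
      (⟨i', hx, hi⟩ | ⟨hx, hi⟩)⟩
    · subst he; exact Or.inl ⟨hx, hi⟩
    · subst he; exact Or.inr (Or.inr ⟨i, hx, Or.inl hi⟩)
    · exact Or.inr (Or.inr ⟨i', hx, Or.inr hi⟩)
    · exact Or.inr (Or.inl ⟨hx, hi⟩)
  · rintro (⟨rfl, hj⟩ | ⟨rfl, hj⟩ | ⟨i, rfl, hij | hij⟩)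
    · exact ⟨by simp, Or.inl (Or.inl ⟨e.1, e.2, rfl, rfl, hj⟩)⟩
    · exact ⟨by simp, Or.inr (Or.inr ⟨rfl, hj⟩)⟩
    · refine ⟨?_, Or.inl (Or.inr ⟨e.1, e.2, i, rfl, rfl, hij⟩)⟩
      intro h
      simp only [Sum.inr.injEq, Prod.mk.injEq] at h
      rcases h with ⟨-, rfl⟩; omega
    · refine ⟨?_, Or.inr (Or.inl ⟨i, rfl, hij⟩)⟩
      intro h
      simp only [Sum.inr.injEq, Prod.mk.injEq] at h
      rcases h with ⟨-, rfl⟩; omega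

lemma addPaths_edge_adj {q : ℕ} {o : G.edgeSet → V × V}
    (ho : ∀ e : G.edgeSet, s((o e).1, (o e).2) = (e : Sym2 V)) (e : G.edgeSet) :
    G.Adj (o e).1 (o e).2 := by
  rw [← SimpleGraph.mem_edgeSet, ho e]; exact e.2

lemma addPaths_nbrs {q : ℕ} (hq : 2 ≤ q) {o : G.edgeSet → V × V}
    (ho : ∀ e : G.edgeSet, s((o e).1, (o e).2) = (e : Sym2 V))
    (e : G.edgeSet) (j : Fin (q-1)) :
    ∃ n1 n2 : V ⊕ (G.edgeSet × Fin (q-1)), n1 ≠ n2 ∧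
      (∀ x, (addPaths G q o).Adj x (Sum.inr (e, j)) → x = n1 ∨ x = n2) ∧
      (((j:ℕ) = 0 ∧ n1 = Sum.inl (o e).1) ∨
        ∃ i : Fin (q-1), (i:ℕ) + 1 = (j:ℕ) ∧ n1 = Sum.inr (e, i)) ∧
      (((j:ℕ) = q - 2 ∧ n2 = Sum.inl (o e).2) ∨
        ∃ i : Fin (q-1), (i:ℕ) = (j:ℕ) + 1 ∧ n2 = Sum.inr (e, i)) := by
  have hjlt := j.isLt
  have hadje := addPaths_edge_adj (q := q) ho e
  by_cases h0 : (j : ℕ) = 0 <;> by_cases hl : (j : ℕ) = q - 2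
  · -- n1 = inl fst, n2 = inl snd
    refine ⟨Sum.inl (o e).1, Sum.inl (o e).2, by simpa using hadje.ne, ?_, Or.inl ⟨h0, rfl⟩,
      Or.inl ⟨hl, rfl⟩⟩
    intro x hx
    rcases addPaths_adj_inr.mp hx with ⟨rfl, -⟩ | ⟨rfl, -⟩ | ⟨i, rfl, hi | hi⟩
    · exact Or.inl rfl
    · exact Or.inr rfl
    · omega
    · have := i.isLt; omega
  · refine ⟨Sum.inl (o e).1, Sum.inr (e, ⟨(j:ℕ) + 1, by omega⟩), by simp, ?_, Or.inl ⟨h0, rfl⟩,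
      Or.inr ⟨⟨(j:ℕ) + 1, by omega⟩, rfl, rfl⟩⟩
    intro x hx
    rcases addPaths_adj_inr.mp hx with ⟨rfl, -⟩ | ⟨rfl, hj⟩ | ⟨i, rfl, hi | hi⟩
    · exact Or.inl rfl
    · omega
    · omega
    · exact Or.inr (by rw [show i = ⟨(j:ℕ) + 1, by omega⟩ from Fin.ext hi])
  · refine ⟨Sum.inr (e, ⟨(j:ℕ) - 1, by omega⟩), Sum.inl (o e).2, by simp, ?_,
      Or.inr ⟨⟨(j:ℕ) - 1, by omega⟩, by simp; omega, rfl⟩, Or.inl ⟨hl, rfl⟩⟩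
    intro x hx
    rcases addPaths_adj_inr.mp hx with ⟨rfl, hj⟩ | ⟨rfl, -⟩ | ⟨i, rfl, hi | hi⟩
    · omega
    · exact Or.inr rfl
    · exact Or.inl (by rw [show i = ⟨(j:ℕ) - 1, by omega⟩ from Fin.ext (by simp; omega)])
    · have := i.isLt; omega
  · refine ⟨Sum.inr (e, ⟨(j:ℕ) - 1, by omega⟩), Sum.inr (e, ⟨(j:ℕ) + 1, by omega⟩), ?_, ?_,
      Or.inr ⟨⟨(j:ℕ) - 1, by omega⟩, by simp; omega, rfl⟩,
      Or.inr ⟨⟨(j:ℕ) + 1, by omega⟩, rfl, rfl⟩⟩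
    · intro h
      simp only [Sum.inr.injEq, Prod.mk.injEq, Fin.mk.injEq, true_and] at h
      omega
    intro x hx
    rcases addPaths_adj_inr.mp hx with ⟨rfl, hj⟩ | ⟨rfl, hj⟩ | ⟨i, rfl, hi | hi⟩
    · omega
    · omega
    · exact Or.inl (by rw [show i = ⟨(j:ℕ) - 1, by omega⟩ from Fin.ext (by simp; omega)])
    · exact Or.inr (by rw [show i = ⟨(j:ℕ) + 1, by omega⟩ from Fin.ext hi])

lemma fvs_forward {q : ℕ} (hq : 2 ≤ q) {o : G.edgeSet → V × V}
    (ho : ∀ e : G.edgeSet, s((o e).1, (o e).2) = (e : Sym2 V)) {S : Set V} (hVC : IsVC G S) :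
    IsFVS (addPaths G q o) (Sum.inl '' S) := by
  classical
  intro v c hc
  set vals := c.support.map Subtype.val with hvals
  have hnotS : ∀ a : V, Sum.inl a ∈ vals → a ∉ S := by
    intro a ha haS
    obtain ⟨x, hx, hxval⟩ := List.mem_map.mp ha
    exact x.2 (by rw [hxval]; exact ⟨a, haS, rfl⟩)
  have hstep : ∀ (e : G.edgeSet) (j : Fin (q-1)), Sum.inr (e, j) ∈ vals →
      (((j:ℕ) = 0 ∧ Sum.inl (o e).1 ∈ vals) ∨
        ∃ i : Fin (q-1), (i:ℕ) + 1 = (j:ℕ) ∧ Sum.inr (e, i) ∈ vals) ∧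
      (((j:ℕ) = q - 2 ∧ Sum.inl (o e).2 ∈ vals) ∨
        ∃ i : Fin (q-1), (i:ℕ) = (j:ℕ) + 1 ∧ Sum.inr (e, i) ∈ vals) := by
    intro e j hj
    obtain ⟨x, hxsup, hxval⟩ := List.mem_map.mp hj
    obtain ⟨n1, n2, hne, hcov, hn1, hn2⟩ := addPaths_nbrs hq ho e j
    obtain ⟨y, z, hyz, hxy, hxz, hysup, hzsup⟩ := cycle_two_neighbors hc hxsup
    have hyadj : (addPaths G q o).Adj y.val (Sum.inr (e, j)) := by
      have h' : (addPaths G q o).Adj x.val y.val := hxy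
      rw [hxval] at h'; exact h'.symm
    have hzadj : (addPaths G q o).Adj z.val (Sum.inr (e, j)) := by
      have h' : (addPaths G q o).Adj x.val z.val := hxz
      rw [hxval] at h'; exact h'.symm
    have hyv := hcov _ hyadj
    have hzv := hcov _ hzadj
    have hvalne : y.val ≠ z.val := fun h => hyz (Subtype.ext h)
    have hy' : y.val ∈ vals := List.mem_map.mpr ⟨y, hysup, rfl⟩
    have hz' : z.val ∈ vals := List.mem_map.mpr ⟨z, hzsup, rfl⟩
    have hboth : n1 ∈ vals ∧ n2 ∈ vals := by
      rcases hyv with h1 | h1 <;> rcases hzv with h2 | h2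
      · exact (hvalne (h1.trans h2.symm)).elim
      · exact ⟨h1 ▸ hy', h2 ▸ hz'⟩
      · exact ⟨h2 ▸ hz', h1 ▸ hy'⟩
      · exact (hvalne (h1.trans h2.symm)).elim
    constructor
    · rcases hn1 with ⟨hj0, rfl⟩ | ⟨i, hi, rfl⟩
      · exact Or.inl ⟨hj0, hboth.1⟩
      · exact Or.inr ⟨i, hi, hboth.1⟩
    · rcases hn2 with ⟨hjl, rfl⟩ | ⟨i, hi, rfl⟩
      · exact Or.inl ⟨hjl, hboth.2⟩
      · exact Or.inr ⟨i, hi, hboth.2⟩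
  have hdown : ∀ (t : ℕ) (e : G.edgeSet) (j : Fin (q-1)), (j:ℕ) ≤ t →
      Sum.inr (e, j) ∈ vals → Sum.inl (o e).1 ∈ vals := by
    intro t
    induction t with
    | zero =>
      intro e j hj hmem
      rcases (hstep e j hmem).1 with ⟨h0, h⟩ | ⟨i, hi, h⟩
      · exact h
      · omega
    | succ t ih =>
      intro e j hj hmem
      rcases (hstep e j hmem).1 with ⟨h0, h⟩ | ⟨i, hi, h⟩
      · exact h
      · exact ih e i (by omega) h
  have hup : ∀ (t : ℕ) (e : G.edgeSet) (j : Fin (q-1)), q - 2 - (j:ℕ) ≤ t →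
      Sum.inr (e, j) ∈ vals → Sum.inl (o e).2 ∈ vals := by
    intro t
    induction t with
    | zero =>
      intro e j hj hmem
      rcases (hstep e j hmem).2 with ⟨h0, h⟩ | ⟨i, hi, h⟩
      · exact h
      · have h1 := i.isLt; have h2 := j.isLt; omega
    | succ t ih =>
      intro e j hj hmem
      rcases (hstep e j hmem).2 with ⟨h0, h⟩ | ⟨i, hi, h⟩
      · exact h
      · exact ih e i (by omega) h
  obtain ⟨y0, hadj0, c', hc'eq⟩ := Walk.not_nil_iff.mp hc.not_nil
  have hadj0' : (addPaths G q o).Adj v.val y0.val := hadj0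
  have hvmem : v.val ∈ vals := List.mem_map.mpr ⟨v, c.start_mem_support, rfl⟩
  have hy0mem : y0.val ∈ vals := List.mem_map.mpr ⟨y0, by rw [hc'eq]; simp, rfl⟩
  have hexinr : ∃ (e : G.edgeSet) (j : Fin (q-1)), Sum.inr (e, j) ∈ vals := by
    rcases hvv : v.val with a | ⟨e, jj⟩
    · rcases hyy : y0.val with b | ⟨e, jj⟩
      · rw [hvv, hyy, addPaths_adj_inl_inl] at hadj0'
        rcases hVC hadj0' with h | h
        · exact absurd h (hnotS a (hvv ▸ hvmem))
        · exact absurd h (hnotS b (hyy ▸ hy0mem))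
      · exact ⟨e, jj, hyy ▸ hy0mem⟩
    · exact ⟨e, jj, hvv ▸ hvmem⟩
  obtain ⟨e, j, hj⟩ := hexinr
  have h1 := hdown (j:ℕ) e j le_rfl hj
  have h2 := hup (q - 2 - (j:ℕ)) e j le_rfl hj
  have hadje := addPaths_edge_adj (q := q) ho e
  rcases hVC hadje with h | h
  · exact hnotS _ h1 h
  · exact hnotS _ h2 h

lemma gadget_cycle {q : ℕ} (hq : 2 ≤ q) {o : G.edgeSet → V × V}
    (ho : ∀ e : G.edgeSet, s((o e).1, (o e).2) = (e : Sym2 V)) (e : G.edgeSet)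
    {T : Set (V ⊕ (G.edgeSet × Fin (q-1)))}
    (h1 : Sum.inl (o e).1 ∈ T) (h2 : Sum.inl (o e).2 ∈ T)
    (h3 : ∀ i : Fin (q-1), Sum.inr (e, i) ∈ T)
    (hacyc : ((addPaths G q o).induce T).IsAcyclic) : False := by
  have hadje := addPaths_edge_adj (q := q) ho e
  have hm : 1 ≤ q - 1 := by omega
  have hidx : ∀ t : ℕ, q - 2 - t < q - 1 := by omega
  have key : ∀ t : ℕ, t < q - 1 →
      ∃ w : ((addPaths G q o).induce T).Walk ⟨Sum.inr (e, ⟨q - 2 - t, hidx t⟩), h3 _⟩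
        ⟨Sum.inl (o e).2, h2⟩, w.IsPath ∧ ∀ x ∈ w.support,
          x.val = Sum.inl (o e).2 ∨
            ∃ i : Fin (q-1), x.val = Sum.inr (e, i) ∧ q - 2 - t ≤ (i:ℕ) := by
    intro t
    induction t with
    | zero =>
      intro ht
      have hadj : ((addPaths G q o).induce T).Adj ⟨Sum.inr (e, ⟨q - 2 - 0, hidx 0⟩), h3 _⟩
          ⟨Sum.inl (o e).2, h2⟩ := by
        show (addPaths G q o).Adj _ _
        exact (addPaths_adj_inr.mpr (Or.inr (Or.inl ⟨rfl, by simp⟩))).symm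
      refine ⟨Walk.cons hadj Walk.nil, ?_, ?_⟩
      · rw [Walk.isPath_def]
        simp only [Walk.support_cons, Walk.support_nil, List.nodup_cons, List.mem_singleton,
          List.nodup_nil, and_true, List.not_mem_nil, not_false_iff]
        intro h
        simpa using congrArg Subtype.val h
      · intro x hx
        simp only [Walk.support_cons, Walk.support_nil, List.mem_cons, List.mem_singleton,
          List.not_mem_nil, or_false] at hx
        rcases hx with rfl | rfl
        · exact Or.inr ⟨⟨q - 2 - 0, hidx 0⟩, rfl, le_rfl⟩
        · exact Or.inl rfl
    | succ t ih =>
      intro ht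
      obtain ⟨w, hwpath, hwsup⟩ := ih (by omega)
      have hadj : ((addPaths G q o).induce T).Adj ⟨Sum.inr (e, ⟨q - 2 - (t+1), hidx _⟩), h3 _⟩
          ⟨Sum.inr (e, ⟨q - 2 - t, hidx _⟩), h3 _⟩ := by
        show (addPaths G q o).Adj _ _
        exact (addPaths_adj_inr.mpr (Or.inr (Or.inr
          ⟨⟨q - 2 - (t+1), hidx _⟩, rfl, Or.inl (by show q - 2 - t = q - 2 - (t + 1) + 1; omega)⟩)))
      refine ⟨Walk.cons hadj w, ?_, ?_⟩
      · refine hwpath.cons ?_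
        intro hmem
        rcases hwsup _ hmem with h | ⟨i, hval, hle⟩
        · simpa using h
        · have hvi : (Sum.inr (e, ⟨q - 2 - (t+1), hidx _⟩) : V ⊕ (G.edgeSet × Fin (q-1)))
              = Sum.inr (e, i) := hval
          simp only [Sum.inr.injEq, Prod.mk.injEq] at hvi
          have hvi2 : q - 2 - (t+1) = (i:ℕ) := congrArg Fin.val hvi.2
          omega
      · intro x hx
        rw [Walk.support_cons] at hx
        rcases List.mem_cons.mp hx with rfl | hx'
        · exact Or.inr ⟨_, rfl, le_rfl⟩
        · rcases hwsup _ hx' with h | ⟨i, hvl, hle⟩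
          · exact Or.inl h
          · exact Or.inr ⟨i, hvl, by omega⟩
  obtain ⟨w, hwpath, hwsup⟩ := key (q - 2) (by omega)
  have hadjvu : ((addPaths G q o).induce T).Adj ⟨Sum.inl (o e).2, h2⟩ ⟨Sum.inl (o e).1, h1⟩ := by
    show (addPaths G q o).Adj _ _
    exact addPaths_adj_inl_inl.mpr hadje.symm
  have hu_not : (⟨Sum.inl (o e).1, h1⟩ : T) ∉ w.support := by
    intro hmem
    rcases hwsup _ hmem with h | ⟨i, hvl, -⟩
    · exact hadje.ne (by simpa using h)
    · simpa using hvl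
  have hPpath : (w.concat hadjvu).IsPath := by
    rw [Walk.isPath_def, Walk.support_concat]
    rw [List.nodup_append]
    refine ⟨hwpath.support_nodup, List.nodup_singleton _, ?_⟩
    intro a ha b hb
    rw [List.mem_singleton] at hb
    subst hb
    rintro rfl
    exact hu_not ha
  have hadjstart : ((addPaths G q o).induce T).Adj ⟨Sum.inl (o e).1, h1⟩
      ⟨Sum.inr (e, ⟨q - 2 - (q - 2), hidx _⟩), h3 _⟩ := by
    show (addPaths G q o).Adj _ _
    exact addPaths_adj_inr.mpr (Or.inl ⟨rfl, by show q - 2 - (q-2) = 0; omega⟩)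
  have hedge : s((⟨Sum.inl (o e).1, h1⟩ : T), ⟨Sum.inr (e, ⟨q - 2 - (q - 2), hidx _⟩), h3 _⟩)
      ∉ (w.concat hadjvu).edges := by
    rw [Walk.edges_concat]
    intro hmem
    rcases (by rwa [List.concat_eq_append, List.mem_append] at hmem) with h | h
    · exact hu_not (Walk.fst_mem_support_of_mem_edges w h)
    · rw [List.mem_singleton] at h
      rw [Sym2.eq_iff] at h
      rcases h with ⟨h', -⟩ | ⟨-, h'⟩
      · exact hadje.ne (by simpa using congrArg Subtype.val h')
      · simpa using congrArg Subtype.val h'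
  exact hacyc (Walk.cons hadjstart (w.concat hadjvu))
    ((Walk.cons_isCycle_iff _ _).mpr ⟨hPpath, hedge⟩)

/-- Let `G` be a connected graph of girth at least `p` and let `G'` be obtained
from `G` by adding, for each edge `uv`, a new path of length `p - 1` between `u` and `v`
(keeping the edge `uv`), so that each edge of `G` lies on a cycle of length `p` in `G'`. Then
for every `k`, `G` has a connected vertex cover of size at most `k` iff `G'` has a connected
feedback vertex set of size at most `k`. -/
theorem connected_vc_iff_connected_fvs_of_gadget {V : Type*} [Fintype V] (G : SimpleGraph V)
    (hG : G.Connected) (p : ℕ) (hp : 3 ≤ p) (hgirth : (p : ℕ∞) ≤ G.girth)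
    (o : G.edgeSet → V × V)
    (ho : ∀ e : G.edgeSet, s((o e).1, (o e).2) = (e : Sym2 V)) (k : ℕ) :
    (∃ S : Set V, IsVC G S ∧ ConnSet G S ∧ S.ncard ≤ k) ↔
      (∃ S' : Set (V ⊕ (G.edgeSet × Fin (p - 1 - 1))),
        IsFVS (addPaths G (p - 1) o) S' ∧ ConnSet (addPaths G (p - 1) o) S' ∧
          S'.ncard ≤ k) := by
  have hq : 2 ≤ p - 1 := by omega
  constructor
  · rintro ⟨S, hVC, hConn, hcard⟩
    refine ⟨Sum.inl '' S, fvs_forward hq ho hVC, ?_, ?_⟩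
    · exact connset_map Sum.inl (fun x y h => Or.inr (addPaths_adj_inl_inl.mpr h)) hConn
    · rwa [Set.ncard_image_of_injective _ Sum.inl_injective]
  · rintro ⟨S', hFVS, hConn', hcard⟩
    set π : (V ⊕ (G.edgeSet × Fin (p - 1 - 1))) → V :=
      Sum.elim id (fun ei => (o ei.1).1) with hπ
    refine ⟨π '' S', ?_, ?_, ?_⟩
    · intro u v huv
      by_contra hcon
      push_neg at hcon
      obtain ⟨hu, hv⟩ := hcon
      set e : G.edgeSet := ⟨s(u, v), huv⟩ with he
      have hcases : ((o e).1 = u ∧ (o e).2 = v) ∨ ((o e).1 = v ∧ (o e).2 = u) := by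
        have hoe := ho e
        rwa [Sym2.eq_iff] at hoe
      have h1 : Sum.inl (o e).1 ∈ (S'ᶜ : Set _) := by
        intro hmem
        have hmem' : (o e).1 ∈ π '' S' := ⟨_, hmem, rfl⟩
        rcases hcases with ⟨h', -⟩ | ⟨h', -⟩ <;> rw [h'] at hmem'
        · exact hu hmem'
        · exact hv hmem'
      have h2 : Sum.inl (o e).2 ∈ (S'ᶜ : Set _) := by
        intro hmem
        have hmem' : (o e).2 ∈ π '' S' := ⟨_, hmem, rfl⟩
        rcases hcases with ⟨-, h'⟩ | ⟨-, h'⟩ <;> rw [h'] at hmem'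
        · exact hv hmem'
        · exact hu hmem'
      have h3 : ∀ i : Fin (p - 1 - 1), Sum.inr (e, i) ∈ (S'ᶜ : Set _) := by
        intro i hmem
        have hmem' : (o e).1 ∈ π '' S' := ⟨_, hmem, rfl⟩
        rcases hcases with ⟨h', -⟩ | ⟨h', -⟩ <;> rw [h'] at hmem'
        · exact hu hmem'
        · exact hv hmem'
      exact gadget_cycle hq ho e h1 h2 h3 hFVS
    · refine connset_map π (fun x y h => ?_) hConn'
      match x, y with
      | Sum.inl a, Sum.inl b =>
        exact Or.inr (addPaths_adj_inl_inl.mp h)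
      | Sum.inl a, Sum.inr (e, i) =>
        rcases addPaths_adj_inr.mp h with ⟨hx, -⟩ | ⟨hx, -⟩ | ⟨i', hx, -⟩
        · exact Or.inl (by simpa [hπ] using congrArg π hx)
        · refine Or.inr ?_
          have ha : a = (o e).2 := by simpa using hx
          subst ha
          simpa [hπ] using (addPaths_edge_adj (q := p - 1) ho e).symm
        · exact absurd hx (by simp)
      | Sum.inr (e, i), Sum.inl a =>
        rcases addPaths_adj_inr.mp h.symm with ⟨hx, -⟩ | ⟨hx, -⟩ | ⟨i', hx, -⟩
        · exact Or.inl (by simpa [hπ] using (congrArg π hx).symm)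
        · refine Or.inr ?_
          have ha : a = (o e).2 := by simpa using hx
          subst ha
          simpa [hπ] using addPaths_edge_adj (q := p - 1) ho e
        · exact absurd hx (by simp)
      | Sum.inr (e, i), Sum.inr (e', i') =>
        rcases addPaths_adj_inr.mp h with ⟨hx, -⟩ | ⟨hx, -⟩ | ⟨i'', hx, -⟩
        · exact absurd hx (by simp)
        · exact absurd hx (by simp)
        · refine Or.inl ?_
          have he' : e = e' := by
            simp only [Sum.inr.injEq, Prod.mk.injEq] at hx
            exact hx.1
          subst he'
          rfl
    · exact le_trans (Set.ncard_image_le (Set.toFinite S')) hcard
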